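/- Let M = ⟨V, D, ·_M⟩ be a finite monadic Σ-PNmatrix with discriminator S̃ = {S̃_x}_{x∈V}, where each S̃_x is partitioned into Ω_x = {S ∈ S̃_x : S_M(x) ⊆ D} and ℧_x = {S ∈ S̃_x : S_M(x) ⊆ V∖D}. Then the multiple-conclusion calculus R_M^S̃ = R_∃ ∪ R_D ∪ R_Σ ∪ R_T is an S-analytic calculus for the multiple-conclusion consequence ▷_M, where: R_∃ contains, for each X ⊆ V and each choice set ℧*_X (one element of ℧_x for each x ∈ X) and Ω*_{V∖X} (one element of Ω_x for each x ∈ V∖X), the rule with premises ℧*_X(p) and conclusions Ω*_{V∖X}(p); R_D contains, for each x ∈ D, the rule with premises Ω_x(p) and conclusions {p} ∪ ℧_x(p), and for each x ∉ D, the rule with premises Ω_x(p) ∪ {p} and conclusions ℧_x(p); R_Σ contains, for each k-place © ∈ Σ, each x₁,…,x_k ∈ V and each y ∉ ©_M(x₁,…,x_k), the rule with premises ⋃_i Ω_{x_i}(p_i) ∪ Ω_y(©(p₁,…,p_k)) and conclusions ⋃_i ℧_{x_i}(p_i) ∪ ℧_y(©(p₁,…,p_k)); and R_T contains, for each X ⊆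 V with X ∉ T_M, the rule with premises ⋃_{x_i∈X} Ω_{x_i}(p_i) and conclusions ⋃_{x_i∈X} ℧_{x_i}(p_i). -/

import Mathlib

set_option autoImplicit false

namespace PNPaper

/-- Formulas over a propositional signature given by a type `C` of connectives
with arity function `ar`, generated over a set (type) `P` of sentential variables. -/
inductive Fm (C : Type) (ar : C → ℕ) (P : Type) : Type where
  | var : P → Fm C ar P
  | app : (c : C) → (Fin (ar c) → Fm C ar P) → Fm C ar P

variable {C : Type} {ar : C → ℕ} {P Q : Type} {V W : Type}

/-- Substitution, extended to the unique endomorphism of the formula algebra. -/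
def Fm.subst (σ : Q → Fm C ar P) : Fm C ar Q → Fm C ar P
  | .var q => σ q
  | .app c As => .app c (fun i => (As i).subst σ)

/-- The set of substitution instances of formulas in `Ax`. -/
def instSet (Ax : Set (Fm C ar P)) : Set (Fm C ar P) :=
  {B | ∃ A ∈ Ax, ∃ σ : P → Fm C ar P, B = A.subst σ}

/-- A formula uses only connectives from `S`. -/
def Fm.usesOnly (S : Set C) : Fm C ar P → Prop
  | .var _ => True
  | .app c As => c ∈ S ∧ ∀ i, (As i).usesOnly S

/-- All variables of the formula belong to `Vs`. -/
def Fm.varsIn (Vs : Set P) : Fm C ar P → Prop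
  | .var p => p ∈ Vs
  | .app _ As => ∀ i, (As i).varsIn Vs

/-- A Σ-PNmatrix: a set of truth-values (carrier), designated values,
and a (possibly partial, non-deterministic) truth-table for each connective. -/
structure Mat (C : Type) (ar : C → ℕ) (V : Type) where
  carrier : Set V
  desig : Set V
  int : (c : C) → (Fin (ar c) → V) → Set V

/-- Well-formedness: `D ⊆ V` and truth-tables take values in `V`. -/
def Mat.WF (M : Mat C ar V) : Prop :=
  M.desig ⊆ M.carrier ∧
  ∀ (c : C) (xs : Fin (ar c) → V), (∀ i, xs i ∈ M.carrier) → M.int c xs ⊆ M.carrier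

/-- An `M`-valuation. -/
def Mat.IsVal (M : Mat C ar V) (v : Fm C ar P → V) : Prop :=
  (∀ A, v A ∈ M.carrier) ∧
  ∀ (c : C) (As : Fin (ar c) → Fm C ar P), v (.app c As) ∈ M.int c (fun i => v (As i))

/-- The (single conclusion) consequence relation `⊢_M`. -/
def Mat.Conseq (M : Mat C ar V) (Γ : Set (Fm C ar P)) (A : Fm C ar P) : Prop :=
  ∀ v : Fm C ar P → V, M.IsVal v → (∀ B ∈ Γ, v B ∈ M.desig) → v A ∈ M.desig

/-- The strengthening `⊢_M^Ax` of `⊢_M` with (schema) axioms `Ax`. -/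
def Mat.ConseqAx (M : Mat C ar V) (Ax Γ : Set (Fm C ar P)) (A : Fm C ar P) : Prop :=
  M.Conseq (Γ ∪ instSet Ax) A

/-- The multiple-conclusion consequence relation `▷_M`. -/
def Mat.MConseq (M : Mat C ar V) (Γ Δ : Set (Fm C ar P)) : Prop :=
  ∀ v : Fm C ar P → V, M.IsVal v → (∀ B ∈ Γ, v B ∈ M.desig) → ∃ B ∈ Δ, v B ∈ M.desig

/-- The set `A_M(x₁,…,xₙ)` of possible values of `A` when `pᵢ ↦ xᵢ`. -/
def Mat.fmSet (M : Mat C ar V) (n : ℕ) (A : Fm C ar ℕ) (xs : Fin n → V) : Set V :=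
  {y | ∃ v : Fm C ar ℕ → V, M.IsVal v ∧ (∀ i : Fin n, v (Fm.var i.1) = xs i) ∧ v A = y}

/-- `M` is `S`-deterministic. -/
def Mat.DetOn (M : Mat C ar V) (S : Set C) : Prop :=
  ∀ c ∈ S, ∀ xs : Fin (ar c) → V, (∀ i, xs i ∈ M.carrier) → (M.int c xs).Subsingleton

/-- `M` is total. -/
def Mat.Total (M : Mat C ar V) : Prop :=
  ∀ (c : C) (xs : Fin (ar c) → V), (∀ i, xs i ∈ M.carrier) → (M.int c xs).Nonempty

/-- `M'` is a refinement of `M`. -/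
def IsRefinement (M' M : Mat C ar V) : Prop :=
  M'.carrier ⊆ M.carrier ∧
  M'.desig = M.desig ∩ M'.carrier ∧
  ∀ (c : C) (xs : Fin (ar c) → V), (∀ i, xs i ∈ M'.carrier) → M'.int c xs ⊆ M.int c xs

/-- `E` is an expansion function for `M` with contraction `ct`:
the sets `E x` (for truth-values `x` of `M`) are non-empty and `ct` picks, for each
element of `E x`, the unique `x` it expands (this forces pairwise disjointness). -/
def IsExpansion (M : Mat C ar V) (E : V → Set W) (ct : W → V) : Prop :=
  (∀ x ∈ M.carrier, (E x).Nonempty) ∧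
  (∀ x ∈ M.carrier, ∀ y ∈ E x, ct y = x)

/-- The `E`-expansion of `M`. -/
def expMat (M : Mat C ar V) (E : V → Set W) (ct : W → V) : Mat C ar W where
  carrier := ⋃ x ∈ M.carrier, E x
  desig := ⋃ x ∈ M.desig, E x
  int := fun c ys => ⋃ x ∈ M.int c (fun i => ct (ys i)), E x

/-- A rexpansion of `M` is a refinement of some `E`-expansion of `M`. -/
def IsRexpansion (M' : Mat C ar W) (M : Mat C ar V) : Prop :=
  ∃ (E : V → Set W) (ct : W → V), IsExpansion M E ct ∧ IsRefinement M' (expMat M E ct)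

/-- The set `S_M(x)` of possible values of the one-variable formula `S` (in the
variable `p = p₀`, here the variable `0`) when `p ↦ x`. -/
def sepSet {C : Type} {ar : C → ℕ} {V : Type} (M : Mat C ar V)
    (S : Fm C ar ℕ) (x : V) : Set V :=
  {y | ∃ v : Fm C ar ℕ → V, M.IsVal v ∧ v (Fm.var 0) = x ∧ v S = y}

/-- Two sets of truth-values are separated: one consists of designated values and
the other of undesignated ones. -/
def Separated {C : Type} {ar : C → ℕ} {V : Type} (M : Mat C ar V)
    (X Y : Set V) : Prop :=
  (X ⊆ M.desig ∧ Y ⊆ M.carrier \ M.desig) ∨ (Y ⊆ M.desig ∧ X ⊆ M.carrier \ M.desig)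

/-- `S` is a (monadic) separator for `x` and `y` in `M`. -/
def IsSeparator {C : Type} {ar : C → ℕ} {V : Type} (M : Mat C ar V)
    (S : Fm C ar ℕ) (x y : V) : Prop :=
  S.varsIn {0} ∧ (∀ z ∈ M.carrier, (sepSet M S z).Nonempty) ∧
  Separated M (sepSet M S x) (sepSet M S y)

/-- `M` is monadic: every pair of distinct truth-values has a separator. -/
def Monadic {C : Type} {ar : C → ℕ} {V : Type} (M : Mat C ar V) : Prop :=
  ∀ x ∈ M.carrier, ∀ y ∈ M.carrier, x ≠ y → ∃ S, IsSeparator M S x y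

/-- Multiple-conclusion (schematic) rules: a pair of sets of formulas
(premises / conclusions). -/
abbrev Rule (C : Type) (ar : C → ℕ) := Set (Fm C ar ℕ) × Set (Fm C ar ℕ)

/-- Tree-like multiple-conclusion derivability (Shoesmith–Smiley proofs) from
premise set `Γ` of the conclusion set `Δ`, using rules from `R` instantiated by
substitutions, where all formulas introduced by rule instances belong to `F`:
a proof either closes a branch on a formula of `Δ` already available, or applies a
rule instance whose premises are available, branching on each of its conclusions. -/
inductive MCD {C : Type} {ar : C → ℕ} (R : Set (Rule C ar))
    (F : Set (Fm C ar ℕ)) (Δ : Set (Fm C ar ℕ)) : Set (Fm C ar ℕ) → Prop where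
  | hyp {Γ : Set (Fm C ar ℕ)} {A : Fm C ar ℕ} (hA : A ∈ Γ) (hΔ : A ∈ Δ) : MCD R F Δ Γ
  | app {Γ : Set (Fm C ar ℕ)} (prem concl : Set (Fm C ar ℕ)) (σ : ℕ → Fm C ar ℕ)
      (hR : (prem, concl) ∈ R)
      (hprem : ∀ B ∈ prem, Fm.subst σ B ∈ Γ)
      (hpF : ∀ B ∈ prem, Fm.subst σ B ∈ F)
      (hcF : ∀ B ∈ concl, Fm.subst σ B ∈ F)
      (hbr : ∀ B ∈ concl, MCD R F Δ (insert (Fm.subst σ B) Γ)) : MCD R F Δ Γ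

/-- The set of subformulas of a formula. -/
def Fm.subf {C : Type} {ar : C → ℕ} {P : Type} : Fm C ar P → Set (Fm C ar P)
  | .var p => {Fm.var p}
  | .app c As => insert (Fm.app c As) (⋃ i, (As i).subf)

/-- The `S`-subformulas of the formulas of `Γ`: subformulas of formulas of `Γ`
together with `S(B')` for `S ∈ SS` (one-variable formulas) and `B'` such a subformula. -/
def genSub {C : Type} {ar : C → ℕ} (SS : Set (Fm C ar ℕ)) (Γ : Set (Fm C ar ℕ)) :
    Set (Fm C ar ℕ) :=
  (⋃ B ∈ Γ, B.subf) ∪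
  {A | ∃ s ∈ SS, ∃ B ∈ Γ, ∃ B' ∈ B.subf, A = s.subst (fun _ => B')}

/-- `Φ(B) = {S(B) : S ∈ Φ}` for a set `Φ` of one-variable formulas. -/
def appSet {C : Type} {ar : C → ℕ} (Φ : Set (Fm C ar ℕ)) (B : Fm C ar ℕ) :
    Set (Fm C ar ℕ) :=
  (fun s => s.subst (fun _ => B)) '' Φ

/-- The discriminator's component `S̃ₓ = {S^{xy} : y ≠ x}` for a family `Sf` of
separators. -/
def Stilde {C : Type} {ar : C → ℕ} {V : Type} (M : Mat C ar V)
    (Sf : V → V → Fm C ar ℕ) (x : V) : Set (Fm C ar ℕ) :=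
  {s | ∃ y ∈ M.carrier, y ≠ x ∧ s = Sf x y}

/-- `Ωₓ`: the separators of `S̃ₓ` whose value-set at `x` is designated. -/
def Omega {C : Type} {ar : C → ℕ} {V : Type} (M : Mat C ar V)
    (Sf : V → V → Fm C ar ℕ) (x : V) : Set (Fm C ar ℕ) :=
  {s ∈ Stilde M Sf x | sepSet M s x ⊆ M.desig}

/-- `℧ₓ`: the separators of `S̃ₓ` whose value-set at `x` is undesignated. -/
def Mho {C : Type} {ar : C → ℕ} {V : Type} (M : Mat C ar V)
    (Sf : V → V → Fm C ar ℕ) (x : V) : Set (Fm C ar ℕ) :=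
  {s ∈ Stilde M Sf x | sepSet M s x ⊆ M.carrier \ M.desig}

/-- The possible choice sets `Φ*_X`: subsets of `⋃_{x∈X} Φₓ` meeting each `Φₓ`. -/
def ChoiceOn {C : Type} {ar : C → ℕ} {V : Type} (X : Set V)
    (Φ : V → Set (Fm C ar ℕ)) : Set (Set (Fm C ar ℕ)) :=
  {T | T ⊆ (⋃ x ∈ X, Φ x) ∧ ∀ x ∈ X, (T ∩ Φ x).Nonempty}

/-- `T_M`: the sets of truth-values jointly attainable by a single valuation. -/
def TMset {C : Type} {ar : C → ℕ} {V : Type} (M : Mat C ar V) : Set (Set V) :=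
  {X | ∃ v : Fm C ar ℕ → V, M.IsVal v ∧ X ⊆ Set.range v}

/-- The rules `R_∃`. -/
def Rexists {C : Type} {ar : C → ℕ} {V : Type} (M : Mat C ar V)
    (Sf : V → V → Fm C ar ℕ) : Set (Rule C ar) :=
  {r | ∃ X ⊆ M.carrier, ∃ T ∈ ChoiceOn X (Mho M Sf),
        ∃ T' ∈ ChoiceOn (M.carrier \ X) (Omega M Sf),
        r = (appSet T (Fm.var 0), appSet T' (Fm.var 0))}

/-- The rules `R_D`. -/
def RD {C : Type} {ar : C → ℕ} {V : Type} (M : Mat C ar V)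
    (Sf : V → V → Fm C ar ℕ) : Set (Rule C ar) :=
  {r | ∃ x ∈ M.desig,
        r = (appSet (Omega M Sf x) (Fm.var 0),
             insert (Fm.var 0) (appSet (Mho M Sf x) (Fm.var 0)))} ∪
  {r | ∃ x ∈ M.carrier \ M.desig,
        r = (insert (Fm.var 0) (appSet (Omega M Sf x) (Fm.var 0)),
             appSet (Mho M Sf x) (Fm.var 0))}

/-- The rules `R_Σ`. -/
def RSig {C : Type} {ar : C → ℕ} {V : Type} (M : Mat C ar V)
    (Sf : V → V → Fm C ar ℕ) : Set (Rule C ar) :=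
  {r | ∃ (c : C) (xs : Fin (ar c) → V), (∀ i, xs i ∈ M.carrier) ∧
        ∃ y ∈ M.carrier, y ∉ M.int c xs ∧
        r = ((⋃ i, appSet (Omega M Sf (xs i)) (Fm.var i.1)) ∪
               appSet (Omega M Sf y) (Fm.app c (fun i => Fm.var i.1)),
             (⋃ i, appSet (Mho M Sf (xs i)) (Fm.var i.1)) ∪
               appSet (Mho M Sf y) (Fm.app c (fun i => Fm.var i.1)))}

/-- The rules `R_T`, with distinct variables indexed via an injection `ι`. -/
def RT {C : Type} {ar : C → ℕ} {V : Type} (M : Mat C ar V)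
    (Sf : V → V → Fm C ar ℕ) (ι : V → ℕ) : Set (Rule C ar) :=
  {r | ∃ X ⊆ M.carrier, X ∉ TMset M ∧
        r = (⋃ x ∈ X, appSet (Omega M Sf x) (Fm.var (ι x)),
             ⋃ x ∈ X, appSet (Mho M Sf x) (Fm.var (ι x)))}

/-- The calculus `R_M^{S̃} = R_∃ ∪ R_D ∪ R_Σ ∪ R_T`. -/
def calcR {C : Type} {ar : C → ℕ} {V : Type} (M : Mat C ar V)
    (Sf : V → V → Fm C ar ℕ) (ι : V → ℕ) : Set (Rule C ar) :=
  Rexists M Sf ∪ RD M Sf ∪ RSig M Sf ∪ RT M Sf ι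

/-- The underlying set `𝒮` of monadic separators. -/
def sepFam {C : Type} {ar : C → ℕ} {V : Type} (M : Mat C ar V)
    (Sf : V → V → Fm C ar ℕ) : Set (Fm C ar ℕ) :=
  {s | ∃ x ∈ M.carrier, ∃ y ∈ M.carrier, y ≠ x ∧ s = Sf x y}

section Aux

variable {C : Type} {ar : C → ℕ} {V : Type}

theorem Fm.subst_subst (σ τ : ℕ → Fm C ar ℕ) (A : Fm C ar ℕ) :
    (A.subst τ).subst σ = A.subst (fun n => (τ n).subst σ) := by
  induction A with
  | var p => rfl
  | app c As ih =>
      show Fm.app c _ = Fm.app c _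
      congr 1; funext i; exact ih i

theorem Mat.IsVal.comp {M : Mat C ar V} {v : Fm C ar ℕ → V} (hv : M.IsVal v)
    (σ : ℕ → Fm C ar ℕ) : M.IsVal (fun A => v (A.subst σ)) :=
  ⟨fun A => hv.1 _, fun c As => hv.2 c (fun i => (As i).subst σ)⟩

theorem val_sepSet {M : Mat C ar V} {v : Fm C ar ℕ → V} (hv : M.IsVal v)
    (s B : Fm C ar ℕ) :
    v (s.subst (fun _ => B)) ∈ sepSet M s (v B) :=
  ⟨fun A => v (A.subst (fun _ => B)), hv.comp _, rfl, rfl⟩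

theorem sep_dichotomy {M : Mat C ar V} {Sf : V → V → Fm C ar ℕ}
    (hsep : ∀ x ∈ M.carrier, ∀ y ∈ M.carrier, x ≠ y → IsSeparator M (Sf x y) x y)
    {x y : V} (hx : x ∈ M.carrier) (hy : y ∈ M.carrier) (hne : y ≠ x) :
    (Sf x y ∈ Omega M Sf x ∧ sepSet M (Sf x y) y ⊆ M.carrier \ M.desig) ∨
    (Sf x y ∈ Mho M Sf x ∧ sepSet M (Sf x y) y ⊆ M.desig) := by
  have hS := hsep x hx y hy (Ne.symm hne)
  have hst : Sf x y ∈ Stilde M Sf x := ⟨y, hy, hne, rfl⟩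
  rcases hS.2.2 with h | h
  · exact Or.inl ⟨⟨hst, h.1⟩, h.2⟩
  · exact Or.inr ⟨⟨hst, h.2⟩, h.1⟩

/-- Key lemma: looking at the separator `Sf z (w B)` when `w B ≠ z`. -/
theorem key_sep {M : Mat C ar V} {Sf : V → V → Fm C ar ℕ}
    (hsep : ∀ x ∈ M.carrier, ∀ y ∈ M.carrier, x ≠ y → IsSeparator M (Sf x y) x y)
    {w : Fm C ar ℕ → V} (hw : M.IsVal w) {z : V} (hz : z ∈ M.carrier)
    (B : Fm C ar ℕ) (hne : w B ≠ z) :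
    (Sf z (w B) ∈ Omega M Sf z ∧ w ((Sf z (w B)).subst (fun _ => B)) ∈ M.carrier \ M.desig) ∨
    (Sf z (w B) ∈ Mho M Sf z ∧ w ((Sf z (w B)).subst (fun _ => B)) ∈ M.desig) := by
  have hmem := val_sepSet hw (Sf z (w B)) B
  rcases sep_dichotomy hsep hz (hw.1 B) hne with ⟨h1, h2⟩ | ⟨h1, h2⟩
  · exact Or.inl ⟨h1, h2 hmem⟩
  · exact Or.inr ⟨h1, h2 hmem⟩

/-- Values of `Ω`/`℧` formulas when the value of `B` is exactly `z`. -/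
theorem omega_val {M : Mat C ar V} {Sf : V → V → Fm C ar ℕ}
    {w : Fm C ar ℕ → V} (hw : M.IsVal w) {z : V} {s : Fm C ar ℕ}
    (hs : s ∈ Omega M Sf z) (B : Fm C ar ℕ) (hB : w B = z) :
    w (s.subst (fun _ => B)) ∈ M.desig := by
  have := val_sepSet hw s B
  rw [hB] at this
  exact hs.2 this

theorem mho_val {M : Mat C ar V} {Sf : V → V → Fm C ar ℕ}
    {w : Fm C ar ℕ → V} (hw : M.IsVal w) {z : V} {s : Fm C ar ℕ}
    (hs : s ∈ Mho M Sf z) (B : Fm C ar ℕ) (hB : w B = z) :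
    w (s.subst (fun _ => B)) ∈ M.carrier \ M.desig := by
  have := val_sepSet hw s B
  rw [hB] at this
  exact hs.2 this

end Aux
section Sound
variable {C : Type} {ar : C → ℕ} {V : Type}

theorem rules_sound {M : Mat C ar V} {Sf : V → V → Fm C ar ℕ} {ι : V → ℕ}
    (hWF : M.WF)
    (hsep : ∀ x ∈ M.carrier, ∀ y ∈ M.carrier, x ≠ y → IsSeparator M (Sf x y) x y)
    {r : Rule C ar} (hr : r ∈ calcR M Sf ι)
    {w : Fm C ar ℕ → V} (hw : M.IsVal w)
    (hprem : ∀ B ∈ r.1, w B ∈ M.desig) : ∃ B ∈ r.2, w B ∈ M.desig := by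
  rcases hr with ((hr | hr) | hr) | hr
  · -- Rexists
    obtain ⟨X, hX, T, hT, T', hT', rfl⟩ := hr
    simp only at hprem ⊢
    by_cases hx : w (Fm.var 0) ∈ X
    · obtain ⟨s, hsT, hsM⟩ := hT.2 _ hx
      have := mho_val hw hsM (Fm.var 0) rfl
      exact absurd (hprem _ ⟨s, hsT, rfl⟩) this.2
    · have hxc : w (Fm.var 0) ∈ M.carrier \ X := ⟨hw.1 _, hx⟩
      obtain ⟨s, hsT, hsM⟩ := hT'.2 _ hxc
      exact ⟨_, ⟨s, hsT, rfl⟩, omega_val hw hsM (Fm.var 0) rfl⟩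
  · -- RD
    rcases hr with ⟨x, hx, rfl⟩ | ⟨x, hx, rfl⟩
    · simp only at hprem ⊢
      by_cases hz : w (Fm.var 0) = x
      · exact ⟨Fm.var 0, Set.mem_insert _ _, hz ▸ hx⟩
      · rcases key_sep hsep hw (hWF.1 hx) (Fm.var 0) hz with ⟨hsO, hval⟩ | ⟨hsM, hval⟩
        · exact absurd (hprem _ ⟨_, hsO, rfl⟩) hval.2
        · exact ⟨_, Set.mem_insert_iff.2 (Or.inr ⟨_, hsM, rfl⟩), hval⟩
    · simp only at hprem ⊢
      have hA : w (Fm.var 0) ∈ M.desig := hprem _ (Set.mem_insert _ _)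
      have hz : w (Fm.var 0) ≠ x := fun h => hx.2 (h ▸ hA)
      rcases key_sep hsep hw hx.1 (Fm.var 0) hz with ⟨hsO, hval⟩ | ⟨hsM, hval⟩
      · exact absurd (hprem _ (Set.mem_insert_iff.2 (Or.inr ⟨_, hsO, rfl⟩))) hval.2
      · exact ⟨_, ⟨_, hsM, rfl⟩, hval⟩
  · -- RSig
    obtain ⟨c, xs, hxs, y, hy, hyint, rfl⟩ := hr
    simp only at hprem ⊢
    by_cases hall : ∀ i, w (Fm.var (i : Fin (ar c)).1) = xs i
    · -- the compound formula
      set A0 : Fm C ar ℕ := Fm.app c (fun i => Fm.var i.1) with hA0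
      have hwA0 : w A0 ∈ M.int c xs := by
        have := hw.2 c (fun i => Fm.var i.1)
        rwa [show (fun i => w (Fm.var (i : Fin (ar c)).1)) = xs from funext hall] at this
      have hzy : w A0 ≠ y := fun h => hyint (h ▸ hwA0)
      rcases key_sep hsep hw hy A0 hzy with ⟨hsO, hval⟩ | ⟨hsM, hval⟩
      · exact absurd (hprem _ (Set.mem_union_right _ ⟨_, hsO, rfl⟩)) hval.2
      · exact ⟨_, Set.mem_union_right _ ⟨_, hsM, rfl⟩, hval⟩
    · push_neg at hall
      obtain ⟨i, hi⟩ := hall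
      rcases key_sep hsep hw (hxs i) (Fm.var i.1) hi with ⟨hsO, hval⟩ | ⟨hsM, hval⟩
      · exact absurd (hprem _ (Set.mem_union_left _ (Set.mem_iUnion.2 ⟨i, _, hsO, rfl⟩))) hval.2
      · exact ⟨_, Set.mem_union_left _ (Set.mem_iUnion.2 ⟨i, _, hsM, rfl⟩), hval⟩
  · -- RT
    obtain ⟨X, hX, hXT, rfl⟩ := hr
    simp only at hprem ⊢
    by_cases hall : ∀ x ∈ X, w (Fm.var (ι x)) = x
    · refine absurd ⟨w, hw, fun x hx => ⟨Fm.var (ι x), hall x hx⟩⟩ hXT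
    · push_neg at hall
      obtain ⟨x, hxX, hne⟩ := hall
      rcases key_sep hsep hw (hX hxX) (Fm.var (ι x)) hne with ⟨hsO, hval⟩ | ⟨hsM, hval⟩
      · exact absurd (hprem _ (Set.mem_biUnion hxX ⟨_, hsO, rfl⟩)) hval.2
      · exact ⟨_, Set.mem_biUnion hxX ⟨_, hsM, rfl⟩, hval⟩

end Sound
section MCDLemmas
variable {C : Type} {ar : C → ℕ} {V : Type}

theorem MCD.mono_left {R : Set (Rule C ar)} {F Δ Γ : Set (Fm C ar ℕ)}
    (h : MCD R F Δ Γ) : ∀ {Γ' : Set (Fm C ar ℕ)}, Γ ⊆ Γ' → MCD R F Δ Γ' := by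
  induction h with
  | hyp hA hΔ => exact fun hsub => .hyp (hsub hA) hΔ
  | app prem concl σ hR hprem hpF hcF hbr ih =>
      exact fun hsub => .app prem concl σ hR (fun B hB => hsub (hprem B hB)) hpF hcF
        (fun B hB => ih B hB (Set.insert_subset_insert hsub))

theorem MCD.mono_F {R : Set (Rule C ar)} {F F' Δ Γ : Set (Fm C ar ℕ)}
    (h : MCD R F Δ Γ) (hsub : F ⊆ F') : MCD R F' Δ Γ := by
  induction h with
  | hyp hA hΔ => exact .hyp hA hΔ
  | app prem concl σ hR hprem hpF hcF hbr ih =>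
      exact .app prem concl σ hR hprem (fun B hB => hsub (hpF B hB))
        (fun B hB => hsub (hcF B hB)) ih

theorem mcd_sound {M : Mat C ar V} {R : Set (Rule C ar)} {F Δ Γ : Set (Fm C ar ℕ)}
    (hsound : ∀ r ∈ R, ∀ w : Fm C ar ℕ → V, M.IsVal w →
      (∀ B ∈ r.1, w B ∈ M.desig) → ∃ B ∈ r.2, w B ∈ M.desig)
    (h : MCD R F Δ Γ) : M.MConseq Γ Δ := by
  induction h with
  | hyp hA hΔ => exact fun v _ hv => ⟨_, hΔ, hv _ hA⟩
  | app prem concl σ hR hprem hpF hcF hbr ih =>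
      intro v hval hv
      obtain ⟨B, hB, hBd⟩ := hsound _ hR (fun A => v (A.subst σ)) (hval.comp σ)
        (fun B hB => hv _ (hprem B hB))
      exact ih B hB v hval (fun A hA => hA.elim (fun h => h ▸ hBd) (hv A))

theorem MCD.finite_support {R : Set (Rule C ar)} {F Δ Γ : Set (Fm C ar ℕ)}
    (hR : ∀ r ∈ R, r.1.Finite ∧ r.2.Finite)
    (h : MCD R F Δ Γ) : ∃ Γ₀ ⊆ Γ, Γ₀.Finite ∧ MCD R F Δ Γ₀ := by
  induction h with
  | hyp hA hΔ =>
      exact ⟨{_}, Set.singleton_subset_iff.2 hA, Set.finite_singleton _, .hyp rfl hΔ⟩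
  | @app Γc prem concl σ hRmem hprem hpF hcF hbr ih =>
      have ih' : ∀ B : Fm C ar ℕ, ∃ Γ₀ : Set (Fm C ar ℕ),
          B ∈ concl → Γ₀ ⊆ insert (Fm.subst σ B) Γc ∧ Γ₀.Finite ∧ MCD R F Δ Γ₀ := by
        intro B
        by_cases hB : B ∈ concl
        · obtain ⟨Γ₀, h1, h2, h3⟩ := ih B hB
          exact ⟨Γ₀, fun _ => ⟨h1, h2, h3⟩⟩
        · exact ⟨∅, fun h => absurd h hB⟩
      choose f hf using ih'
      refine ⟨(Fm.subst σ '' prem) ∪ ⋃ B ∈ concl, (f B \ {Fm.subst σ B}), ?_, ?_, ?_⟩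
      · rintro A (⟨B, hB, rfl⟩ | hA)
        · exact hprem B hB
        · obtain ⟨B, hB, hAf, hne⟩ := Set.mem_iUnion₂.1 hA
          exact ((hf B hB).1 hAf).resolve_left hne
      · refine Set.Finite.union ((hR _ hRmem).1.image _) ?_
        exact Set.Finite.biUnion (hR _ hRmem).2 (fun B hB => ((hf B hB).2.1).diff)
      · refine .app prem concl σ hRmem (fun B hB => Set.mem_union_left _ ⟨B, hB, rfl⟩) hpF hcF ?_
        intro B hB
        refine ((hf B hB).2.2).mono_left ?_
        intro A hA
        by_cases hAe : A = Fm.subst σ B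
        · exact hAe ▸ Set.mem_insert _ _
        · exact Set.mem_insert_iff.2 (Or.inr (Set.mem_union_right _
            (Set.mem_biUnion hB ⟨hA, hAe⟩)))

end MCDLemmas
section Fin
variable {C : Type} {ar : C → ℕ} {V : Type}

theorem stilde_finite {M : Mat C ar V} (hfin : M.carrier.Finite)
    (Sf : V → V → Fm C ar ℕ) (x : V) : (Stilde M Sf x).Finite := by
  refine (hfin.image (Sf x)).subset ?_
  rintro s ⟨y, hy, _, rfl⟩; exact ⟨y, hy, rfl⟩

theorem omega_finite {M : Mat C ar V} (hfin : M.carrier.Finite)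
    (Sf : V → V → Fm C ar ℕ) (x : V) : (Omega M Sf x).Finite :=
  (stilde_finite hfin Sf x).subset (fun _ hs => hs.1)

theorem mho_finite {M : Mat C ar V} (hfin : M.carrier.Finite)
    (Sf : V → V → Fm C ar ℕ) (x : V) : (Mho M Sf x).Finite :=
  (stilde_finite hfin Sf x).subset (fun _ hs => hs.1)

theorem appSet_finite {Φ : Set (Fm C ar ℕ)} (h : Φ.Finite) (B : Fm C ar ℕ) :
    (appSet Φ B).Finite := h.image _

theorem calcR_finite {M : Mat C ar V} (hfin : M.carrier.Finite)
    {Sf : V → V → Fm C ar ℕ} {ι : V → ℕ} :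
    ∀ r ∈ calcR M Sf ι, r.1.Finite ∧ r.2.Finite := by
  rintro r (((hr | hr) | hr) | hr)
  · obtain ⟨X, hX, T, hT, T', hT', rfl⟩ := hr
    have hTf : T.Finite := ((hfin.subset hX).biUnion
      (fun x _ => mho_finite hfin Sf x)).subset hT.1
    have hTf' : T'.Finite := ((hfin.diff (t := X)).biUnion
      (fun x _ => omega_finite hfin Sf x)).subset hT'.1
    exact ⟨appSet_finite hTf _, appSet_finite hTf' _⟩
  · rcases hr with ⟨x, hx, rfl⟩ | ⟨x, hx, rfl⟩
    · exact ⟨appSet_finite (omega_finite hfin Sf x) _,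
        (appSet_finite (mho_finite hfin Sf x) _).insert _⟩
    · exact ⟨(appSet_finite (omega_finite hfin Sf x) _).insert _,
        appSet_finite (mho_finite hfin Sf x) _⟩
  · obtain ⟨c, xs, hxs, y, hy, hyint, rfl⟩ := hr
    constructor
    · exact (Set.finite_iUnion (fun i => appSet_finite (omega_finite hfin Sf (xs i)) _)).union
        (appSet_finite (omega_finite hfin Sf y) _)
    · exact (Set.finite_iUnion (fun i => appSet_finite (mho_finite hfin Sf (xs i)) _)).union
        (appSet_finite (mho_finite hfin Sf y) _)
  · obtain ⟨X, hX, hXT, rfl⟩ := hr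
    exact ⟨(hfin.subset hX).biUnion (fun x _ => appSet_finite (omega_finite hfin Sf x) _),
      (hfin.subset hX).biUnion (fun x _ => appSet_finite (mho_finite hfin Sf x) _)⟩

theorem Fm.self_mem_subf {P : Type} (B : Fm C ar P) : B ∈ B.subf := by
  cases B with
  | var p => rfl
  | app c As => exact Set.mem_insert _ _

theorem Fm.subf_trans {P : Type} {B A : Fm C ar P} (h : A ∈ B.subf) :
    A.subf ⊆ B.subf := by
  induction B with
  | var p => cases h; exact fun _ h => h
  | app c As ih =>
      rcases h with h | h
      · subst h; exact fun _ h => h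
      · obtain ⟨i, hi⟩ := Set.mem_iUnion.1 h
        exact fun A' hA' => Set.subset_insert _ _ (Set.mem_iUnion.2 ⟨i, ih i hi hA'⟩)

/-- a finite subset of the union of a nonempty chain is inside one member -/
theorem chain_finite_subset {α : Type*} {c : Set (Set α)} (hc : IsChain (· ⊆ ·) c)
    (hne : c.Nonempty) {s : Set α} (hs : s.Finite) (hsub : s ⊆ ⋃₀ c) :
    ∃ t ∈ c, s ⊆ t := by
  revert hsub
  refine Set.Finite.induction_on (motive := fun s _ => s ⊆ ⋃₀ c → ∃ t ∈ c, s ⊆ t) _ hs (fun _ => ⟨hne.choose, hne.choose_spec, Set.empty_subset _⟩) ?_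
  intro a s ha hsf ih hsub
  obtain ⟨t, htc, hst⟩ := ih (fun x hx => hsub (Set.mem_insert_iff.2 (Or.inr hx)))
  obtain ⟨t', ht'c, hat'⟩ := hsub (Set.mem_insert a s)
  rcases eq_or_ne t t' with rfl | hne'
  · exact ⟨t, htc, Set.insert_subset hat' hst⟩
  rcases hc htc ht'c hne' with h | h
  · exact ⟨t', ht'c, Set.insert_subset hat' (hst.trans h)⟩
  · exact ⟨t, htc, Set.insert_subset (h hat') hst⟩

/-- When the carrier is empty, the empty rule is in `R_∃` and everything is derivable. -/
theorem mcd_of_empty_carrier {M : Mat C ar V} {Sf : V → V → Fm C ar ℕ} {ι : V → ℕ}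
    (h : M.carrier = ∅) (F Δ Γ : Set (Fm C ar ℕ)) : MCD (calcR M Sf ι) F Δ Γ := by
  have hr : ((∅ : Set (Fm C ar ℕ)), (∅ : Set (Fm C ar ℕ))) ∈ calcR M Sf ι := by
    refine Or.inl (Or.inl (Or.inl ⟨∅, Set.empty_subset _, ∅,
      ⟨Set.empty_subset _, fun x hx => absurd hx (Set.notMem_empty x)⟩,
      ∅, ⟨Set.empty_subset _, fun x hx => ?_⟩, ?_⟩))
    · rw [h] at hx; exact absurd hx.1 (Set.notMem_empty x)
    · simp [appSet]
  exact .app ∅ ∅ (fun _ => Fm.var 0) hr (fun B hB => absurd hB (Set.notMem_empty B))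
    (fun B hB => absurd hB (Set.notMem_empty B)) (fun B hB => absurd hB (Set.notMem_empty B))
    (fun B hB => absurd hB (Set.notMem_empty B))

end Fin
section Ext
variable {C : Type} {ar : C → ℕ}

open Classical in
/-- Replace each subformula belonging to `sub` (outermost first) by `t` of it. -/
noncomputable def extFm (sub : Set (Fm C ar ℕ)) (t : Fm C ar ℕ → Fm C ar ℕ) :
    Fm C ar ℕ → Fm C ar ℕ
  | .var p => if Fm.var p ∈ sub then t (.var p) else .var p
  | .app c As => if Fm.app c As ∈ sub then t (.app c As)
      else .app c (fun i => extFm sub t (As i))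

theorem extFm_of_mem {sub : Set (Fm C ar ℕ)} {t : Fm C ar ℕ → Fm C ar ℕ}
    {B : Fm C ar ℕ} (hB : B ∈ sub) : extFm sub t B = t B := by
  cases B with
  | var p => rw [extFm, if_pos hB]
  | app c As => rw [extFm, if_pos hB]

theorem extFm_app_of_not_mem {sub : Set (Fm C ar ℕ)} {t : Fm C ar ℕ → Fm C ar ℕ}
    {c : C} {As : Fin (ar c) → Fm C ar ℕ} (hB : Fm.app c As ∉ sub) :
    extFm sub t (Fm.app c As) = Fm.app c (fun i => extFm sub t (As i)) := by
  rw [extFm, if_neg hB]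

theorem subst_comp_const (s : Fm C ar ℕ) (τ : ℕ → Fm C ar ℕ) (A : Fm C ar ℕ) :
    (s.subst (fun _ => A)).subst τ = s.subst (fun _ => A.subst τ) :=
  Fm.subst_subst τ (fun _ => A) s

end Ext
section Complete
variable {C : Type} {ar : C → ℕ} {V : Type}

theorem stilde_sepFam {M : Mat C ar V} {Sf : V → V → Fm C ar ℕ} {x : V}
    (hx : x ∈ M.carrier) {s : Fm C ar ℕ} (hs : s ∈ Stilde M Sf x) :
    s ∈ sepFam M Sf := by
  obtain ⟨y, hy, hne, rfl⟩ := hs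
  exact ⟨x, hx, y, hy, hne, rfl⟩

theorem completeness {M : Mat C ar V} (hWF : M.WF) (hfin : M.carrier.Finite)
    {Sf : V → V → Fm C ar ℕ}
    (hsep : ∀ x ∈ M.carrier, ∀ y ∈ M.carrier, x ≠ y → IsSeparator M (Sf x y) x y)
    {ι : V → ℕ} (hι : Function.Injective ι) (Γ Δ : Set (Fm C ar ℕ))
    (hnd : ¬ MCD (calcR M Sf ι) (genSub (sepFam M Sf) (Γ ∪ Δ)) Δ Γ) :
    ¬ M.MConseq Γ Δ := by
  classical
  set R := calcR M Sf ι with hR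
  set F := genSub (sepFam M Sf) (Γ ∪ Δ) with hF
  set sub := ⋃ B ∈ Γ ∪ Δ, Fm.subf B with hsubdef
  -- carrier nonempty
  have hcar : M.carrier.Nonempty := by
    rcases Set.eq_empty_or_nonempty M.carrier with h | h
    · exact absurd (mcd_of_empty_carrier h F Δ Γ) hnd
    · exact h
  have hΓsub : Γ ⊆ sub := fun A hA => Set.mem_biUnion (Set.mem_union_left _ hA) A.self_mem_subf
  have hΔsub : Δ ⊆ sub := fun A hA => Set.mem_biUnion (Set.mem_union_right _ hA) A.self_mem_subf
  have hsubF : sub ⊆ F := fun A hA => Set.mem_union_left _ hA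
  have hsubcl : ∀ {B A : Fm C ar ℕ}, B ∈ sub → A ∈ B.subf → A ∈ sub := by
    intro B A hB hA
    obtain ⟨B₀, hB₀, hBs⟩ := Set.mem_iUnion₂.1 hB
    exact Set.mem_iUnion₂.2 ⟨B₀, hB₀, Fm.subf_trans hBs hA⟩
  have hargsub : ∀ {c : C} {As : Fin (ar c) → Fm C ar ℕ}, Fm.app c As ∈ sub →
      ∀ i, As i ∈ sub := by
    intro c As hA i
    exact hsubcl hA (Set.mem_insert_iff.2 (Or.inr (Set.mem_iUnion.2 ⟨i, (As i).self_mem_subf⟩)))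
  have hsF : ∀ {s : Fm C ar ℕ}, s ∈ sepFam M Sf → ∀ {B : Fm C ar ℕ}, B ∈ sub →
      s.subst (fun _ => B) ∈ F := by
    intro s hs B hB
    obtain ⟨B₀, hB₀, hBs⟩ := Set.mem_iUnion₂.1 hB
    exact Set.mem_union_right _ ⟨s, hs, B₀, hB₀, B, hBs, rfl⟩
  -- Zorn
  obtain ⟨G, hΓG, hGmax⟩ : ∃ G, Γ ⊆ G ∧ Maximal
      (· ∈ {G : Set (Fm C ar ℕ) | Γ ⊆ G ∧ G ⊆ F ∧ ¬ MCD R F Δ G}) G := by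
    refine zorn_subset_nonempty _ ?_ Γ ⟨Set.Subset.rfl, fun A hA => hsubF (hΓsub hA), hnd⟩
    intro c hcS hchain hcne
    refine ⟨⋃₀ c, ⟨?_, ?_, ?_⟩, fun s hs => Set.subset_sUnion_of_mem hs⟩
    · obtain ⟨t, ht⟩ := hcne
      exact (hcS ht).1.trans (Set.subset_sUnion_of_mem ht)
    · exact Set.sUnion_subset (fun t ht => (hcS ht).2.1)
    · intro hmcd
      obtain ⟨Γ₀, hΓ₀sub, hΓ₀fin, hΓ₀⟩ := hmcd.finite_support (calcR_finite hfin)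
      obtain ⟨t, htc, hsubt⟩ := chain_finite_subset hchain hcne hΓ₀fin hΓ₀sub
      exact (hcS htc).2.2 (hΓ₀.mono_left hsubt)
  have hGF : G ⊆ F := hGmax.1.2.1
  have hGnd : ¬ MCD R F Δ G := hGmax.1.2.2
  have hGΔ : ∀ A ∈ Δ, A ∉ G := fun A hΔ hG' => hGnd (.hyp hG' hΔ)
  -- closure under rules within F
  have hclose : ∀ prem concl : Set (Fm C ar ℕ), ∀ σ : ℕ → Fm C ar ℕ, (prem, concl) ∈ R →
      (∀ B ∈ prem, B.subst σ ∈ G) → (∀ B ∈ prem, B.subst σ ∈ F) →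
      (∀ B ∈ concl, B.subst σ ∈ F) → ∃ B ∈ concl, B.subst σ ∈ G := by
    intro prem concl σ hrule hpremG hpF hcF
    by_contra hno
    push_neg at hno
    refine hGnd (.app prem concl σ hrule hpremG hpF hcF ?_)
    intro B hB
    by_contra hbr
    have hmem : insert (Fm.subst σ B) G ∈
        {G : Set (Fm C ar ℕ) | Γ ⊆ G ∧ G ⊆ F ∧ ¬ MCD R F Δ G} :=
      ⟨hΓG.trans (Set.subset_insert _ _), Set.insert_subset (hcF B hB) hGF, hbr⟩
    have heq := hGmax.2 hmem (Set.subset_insert _ _)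
    exact hno B hB (heq (Set.mem_insert _ _))
  -- nonemptiness of the value sets
  have hVSne : ∀ B ∈ sub, ∃ x ∈ M.carrier,
      (∀ s ∈ Omega M Sf x, s.subst (fun _ => B) ∈ G) ∧
      (∀ s ∈ Mho M Sf x, s.subst (fun _ => B) ∉ G) := by
    intro B hB
    by_contra hno
    push_neg at hno
    set X : Set V := {x ∈ M.carrier | ∃ s ∈ Mho M Sf x, s.subst (fun _ => B) ∈ G} with hXdef
    have hXch : ∀ x : V, ∃ s : Fm C ar ℕ, x ∈ X →
        s ∈ Mho M Sf x ∧ s.subst (fun _ => B) ∈ G := by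
      intro x
      by_cases hx : x ∈ X
      · obtain ⟨s, hs1, hs2⟩ := hx.2
        exact ⟨s, fun _ => ⟨hs1, hs2⟩⟩
      · exact ⟨Fm.var 0, fun h => absurd h hx⟩
    choose fM hfM using hXch
    have hX'ch : ∀ x : V, ∃ s : Fm C ar ℕ, x ∈ M.carrier \ X →
        s ∈ Omega M Sf x ∧ s.subst (fun _ => B) ∉ G := by
      intro x
      by_cases hx : x ∈ M.carrier \ X
      · have hOall : ∃ s ∈ Omega M Sf x, s.subst (fun _ => B) ∉ G := by
          by_contra hcon
          push_neg at hcon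
          obtain ⟨s, hs1, hs2⟩ := hno x hx.1 hcon
          exact hx.2 ⟨hx.1, s, hs1, hs2⟩
        obtain ⟨s, hs1, hs2⟩ := hOall
        exact ⟨s, fun _ => ⟨hs1, hs2⟩⟩
      · exact ⟨Fm.var 0, fun h => absurd h hx⟩
    choose fO hfO using hX'ch
    have hrule : (appSet (fM '' X) (Fm.var 0), appSet (fO '' (M.carrier \ X)) (Fm.var 0)) ∈ R :=
      Or.inl (Or.inl (Or.inl ⟨X, fun x hx => hx.1,
        fM '' X,
        ⟨fun s hs => by obtain ⟨x, hx, rfl⟩ := hs; exact Set.mem_biUnion hx (hfM x hx).1,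
         fun x hx => ⟨fM x, ⟨x, hx, rfl⟩, (hfM x hx).1⟩⟩,
        fO '' (M.carrier \ X),
        ⟨fun s hs => by obtain ⟨x, hx, rfl⟩ := hs; exact Set.mem_biUnion hx (hfO x hx).1,
         fun x hx => ⟨fO x, ⟨x, hx, rfl⟩, (hfO x hx).1⟩⟩, rfl⟩))
    have h1 : ∀ B' ∈ appSet (fM '' X) (Fm.var 0), Fm.subst (fun _ => B) B' ∈ G := by
      rintro _ ⟨s, ⟨x, hx, rfl⟩, rfl⟩
      rw [subst_comp_const]
      exact (hfM x hx).2
    have h2 : ∀ B' ∈ appSet (fM '' X) (Fm.var 0), Fm.subst (fun _ => B) B' ∈ F := by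
      rintro _ ⟨s, ⟨x, hx, rfl⟩, rfl⟩
      rw [subst_comp_const]
      exact hsF (stilde_sepFam hx.1 (hfM x hx).1.1) hB
    have h3 : ∀ B' ∈ appSet (fO '' (M.carrier \ X)) (Fm.var 0),
        Fm.subst (fun _ => B) B' ∈ F := by
      rintro _ ⟨s, ⟨x, hx, rfl⟩, rfl⟩
      rw [subst_comp_const]
      exact hsF (stilde_sepFam hx.1 (hfO x hx).1.1) hB
    obtain ⟨B', hB', hB'G⟩ := hclose _ _ (fun _ => B) hrule h1 h2 h3
    obtain ⟨s, ⟨x, hx, rfl⟩, rfl⟩ := hB'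
    rw [subst_comp_const] at hB'G
    exact absurd hB'G (hfO x hx).2

  have hVSx : ∀ B : Fm C ar ℕ, ∃ x : V, B ∈ sub → x ∈ M.carrier ∧
      (∀ s ∈ Omega M Sf x, s.subst (fun _ => B) ∈ G) ∧
      (∀ s ∈ Mho M Sf x, s.subst (fun _ => B) ∉ G) := by
    intro B
    by_cases hB : B ∈ sub
    · obtain ⟨x, hx1, hx2⟩ := hVSne B hB
      exact ⟨x, fun _ => ⟨hx1, hx2⟩⟩
    · exact ⟨hcar.choose, fun h => absurd h hB⟩
  choose xv hxv using hVSx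
  -- compatibility with the connectives
  have hP2 : ∀ (c : C) (As : Fin (ar c) → Fm C ar ℕ), Fm.app c As ∈ sub →
      xv (Fm.app c As) ∈ M.int c (fun i => xv (As i)) := by
    intro c As hA
    have hAs : ∀ i, As i ∈ sub := hargsub hA
    by_contra hy
    set A0 : Fm C ar ℕ := Fm.app c (fun i => Fm.var i.1) with hA0
    set σ : ℕ → Fm C ar ℕ := fun n => if h : n < ar c then As ⟨n, h⟩ else Fm.var 0 with hσ
    have hσi : ∀ i : Fin (ar c), σ i.1 = As i := by
      intro i; rw [hσ]; simp
    have hA0σ : A0.subst σ = Fm.app c As := by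
      rw [hA0]
      show Fm.app c _ = _
      congr 1
      funext i
      exact hσi i
    have hrule : ((⋃ i, appSet (Omega M Sf (xv (As i))) (Fm.var i.1)) ∪
          appSet (Omega M Sf (xv (Fm.app c As))) A0,
        (⋃ i, appSet (Mho M Sf (xv (As i))) (Fm.var i.1)) ∪
          appSet (Mho M Sf (xv (Fm.app c As))) A0) ∈ R :=
      Or.inl (Or.inr ⟨c, fun i => xv (As i), fun i => (hxv (As i) (hAs i)).1,
        xv (Fm.app c As), (hxv _ hA).1, hy, rfl⟩)
    have h1 : ∀ B' ∈ (⋃ i, appSet (Omega M Sf (xv (As i))) (Fm.var i.1)) ∪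
        appSet (Omega M Sf (xv (Fm.app c As))) A0, B'.subst σ ∈ G := by
      rintro B' (hB' | ⟨s, hs, rfl⟩)
      · obtain ⟨i, s, hs, rfl⟩ := Set.mem_iUnion.1 hB'
        rw [subst_comp_const, show (Fm.var i.1).subst σ = As i from hσi i]
        exact (hxv (As i) (hAs i)).2.1 s hs
      · rw [subst_comp_const, hA0σ]
        exact (hxv _ hA).2.1 s hs
    have h2 : ∀ B' ∈ (⋃ i, appSet (Omega M Sf (xv (As i))) (Fm.var i.1)) ∪
        appSet (Omega M Sf (xv (Fm.app c As))) A0, B'.subst σ ∈ F := by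
      rintro B' (hB' | ⟨s, hs, rfl⟩)
      · obtain ⟨i, s, hs, rfl⟩ := Set.mem_iUnion.1 hB'
        rw [subst_comp_const, show (Fm.var i.1).subst σ = As i from hσi i]
        exact hsF (stilde_sepFam (hxv (As i) (hAs i)).1 hs.1) (hAs i)
      · rw [subst_comp_const, hA0σ]
        exact hsF (stilde_sepFam (hxv _ hA).1 hs.1) hA
    have h3 : ∀ B' ∈ (⋃ i, appSet (Mho M Sf (xv (As i))) (Fm.var i.1)) ∪
        appSet (Mho M Sf (xv (Fm.app c As))) A0, B'.subst σ ∈ F := by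
      rintro B' (hB' | ⟨s, hs, rfl⟩)
      · obtain ⟨i, s, hs, rfl⟩ := Set.mem_iUnion.1 hB'
        rw [subst_comp_const, show (Fm.var i.1).subst σ = As i from hσi i]
        exact hsF (stilde_sepFam (hxv (As i) (hAs i)).1 hs.1) (hAs i)
      · rw [subst_comp_const, hA0σ]
        exact hsF (stilde_sepFam (hxv _ hA).1 hs.1) hA
    obtain ⟨B', hB', hBG⟩ := hclose _ _ σ hrule h1 h2 h3
    rcases hB' with hB' | ⟨s, hs, rfl⟩
    · obtain ⟨i, s, hs, rfl⟩ := Set.mem_iUnion.1 hB'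
      rw [subst_comp_const, show (Fm.var i.1).subst σ = As i from hσi i] at hBG
      exact absurd hBG ((hxv (As i) (hAs i)).2.2 s hs)
    · rw [subst_comp_const, hA0σ] at hBG
      exact absurd hBG ((hxv _ hA).2.2 s hs)

  -- attainability
  have hP3 : xv '' sub ∈ TMset M := by
    by_contra hXT
    set Bf : V → Fm C ar ℕ := fun x =>
      if h : ∃ B ∈ sub, xv B = x then h.choose else Fm.var 0 with hBfdef
    have hBf : ∀ x ∈ xv '' sub, Bf x ∈ sub ∧ xv (Bf x) = x := by
      rintro _ ⟨B, hB, rfl⟩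
      have hex : ∃ B' ∈ sub, xv B' = xv B := ⟨B, hB, rfl⟩
      rw [hBfdef]; simp only [dif_pos hex]
      exact ⟨hex.choose_spec.1, hex.choose_spec.2⟩
    set σ : ℕ → Fm C ar ℕ := fun n =>
      if h : ∃ x ∈ xv '' sub, ι x = n then Bf h.choose else Fm.var 0 with hσdef
    have hσx : ∀ x ∈ xv '' sub, σ (ι x) = Bf x := by
      intro x hx
      have hex : ∃ x' ∈ xv '' sub, ι x' = ι x := ⟨x, hx, rfl⟩
      rw [hσdef]; simp only [dif_pos hex]
      exact congrArg Bf (hι hex.choose_spec.2)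
    have hXc : xv '' sub ⊆ M.carrier := by
      rintro _ ⟨B, hB, rfl⟩; exact (hxv B hB).1
    have hrule : (⋃ x ∈ xv '' sub, appSet (Omega M Sf x) (Fm.var (ι x)),
        ⋃ x ∈ xv '' sub, appSet (Mho M Sf x) (Fm.var (ι x))) ∈ R :=
      Or.inr ⟨xv '' sub, hXc, hXT, rfl⟩
    have h1 : ∀ B' ∈ ⋃ x ∈ xv '' sub, appSet (Omega M Sf x) (Fm.var (ι x)),
        B'.subst σ ∈ G := by
      intro B' hB'
      obtain ⟨x, hx, s, hs, rfl⟩ := Set.mem_iUnion₂.1 hB'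
      rw [subst_comp_const, show (Fm.var (ι x)).subst σ = Bf x from hσx x hx]
      exact (hxv (Bf x) (hBf x hx).1).2.1 s (by rw [(hBf x hx).2]; exact hs)
    have h2 : ∀ B' ∈ ⋃ x ∈ xv '' sub, appSet (Omega M Sf x) (Fm.var (ι x)),
        B'.subst σ ∈ F := by
      intro B' hB'
      obtain ⟨x, hx, s, hs, rfl⟩ := Set.mem_iUnion₂.1 hB'
      rw [subst_comp_const, show (Fm.var (ι x)).subst σ = Bf x from hσx x hx]
      exact hsF (stilde_sepFam (hXc hx) hs.1) (hBf x hx).1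
    have h3 : ∀ B' ∈ ⋃ x ∈ xv '' sub, appSet (Mho M Sf x) (Fm.var (ι x)),
        B'.subst σ ∈ F := by
      intro B' hB'
      obtain ⟨x, hx, s, hs, rfl⟩ := Set.mem_iUnion₂.1 hB'
      rw [subst_comp_const, show (Fm.var (ι x)).subst σ = Bf x from hσx x hx]
      exact hsF (stilde_sepFam (hXc hx) hs.1) (hBf x hx).1
    obtain ⟨B', hB', hBG⟩ := hclose _ _ σ hrule h1 h2 h3
    obtain ⟨x, hx, s, hs, rfl⟩ := Set.mem_iUnion₂.1 hB'
    rw [subst_comp_const, show (Fm.var (ι x)).subst σ = Bf x from hσx x hx] at hBG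
    exact absurd hBG ((hxv (Bf x) (hBf x hx).1).2.2 s (by rw [(hBf x hx).2]; exact hs))

  -- designation of Γ, non-designation of Δ
  have hP4Γ : ∀ A ∈ Γ, xv A ∈ M.desig := by
    intro A hA
    by_contra hnddes
    have hAsub : A ∈ sub := hΓsub hA
    have hxc : xv A ∈ M.carrier \ M.desig := ⟨(hxv A hAsub).1, hnddes⟩
    have hrule : (insert (Fm.var 0) (appSet (Omega M Sf (xv A)) (Fm.var 0)),
        appSet (Mho M Sf (xv A)) (Fm.var 0)) ∈ R :=
      Or.inl (Or.inl (Or.inr (Or.inr ⟨xv A, hxc, rfl⟩)))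
    have h1 : ∀ B' ∈ insert (Fm.var 0) (appSet (Omega M Sf (xv A)) (Fm.var 0)),
        B'.subst (fun _ => A) ∈ G := by
      rintro B' (rfl | ⟨s, hs, rfl⟩)
      · exact hΓG hA
      · rw [subst_comp_const]; exact (hxv A hAsub).2.1 s hs
    have h2 : ∀ B' ∈ insert (Fm.var 0) (appSet (Omega M Sf (xv A)) (Fm.var 0)),
        B'.subst (fun _ => A) ∈ F := by
      rintro B' (rfl | ⟨s, hs, rfl⟩)
      · exact hsubF hAsub
      · rw [subst_comp_const]; exact hsF (stilde_sepFam (hxv A hAsub).1 hs.1) hAsub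
    have h3 : ∀ B' ∈ appSet (Mho M Sf (xv A)) (Fm.var 0),
        B'.subst (fun _ => A) ∈ F := by
      rintro _ ⟨s, hs, rfl⟩
      rw [subst_comp_const]; exact hsF (stilde_sepFam (hxv A hAsub).1 hs.1) hAsub
    obtain ⟨B', hB', hBG⟩ := hclose _ _ (fun _ => A) hrule h1 h2 h3
    obtain ⟨s, hs, rfl⟩ := hB'
    rw [subst_comp_const] at hBG
    exact absurd hBG ((hxv A hAsub).2.2 s hs)

  have hP4Δ : ∀ A ∈ Δ, xv A ∉ M.desig := by
    intro A hA hdes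
    have hAsub : A ∈ sub := hΔsub hA
    have hrule : (appSet (Omega M Sf (xv A)) (Fm.var 0),
        insert (Fm.var 0) (appSet (Mho M Sf (xv A)) (Fm.var 0))) ∈ R :=
      Or.inl (Or.inl (Or.inr (Or.inl ⟨xv A, hdes, rfl⟩)))
    have h1 : ∀ B' ∈ appSet (Omega M Sf (xv A)) (Fm.var 0),
        B'.subst (fun _ => A) ∈ G := by
      rintro _ ⟨s, hs, rfl⟩
      rw [subst_comp_const]; exact (hxv A hAsub).2.1 s hs
    have h2 : ∀ B' ∈ appSet (Omega M Sf (xv A)) (Fm.var 0),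
        B'.subst (fun _ => A) ∈ F := by
      rintro _ ⟨s, hs, rfl⟩
      rw [subst_comp_const]; exact hsF (stilde_sepFam (hxv A hAsub).1 hs.1) hAsub
    have h3 : ∀ B' ∈ insert (Fm.var 0) (appSet (Mho M Sf (xv A)) (Fm.var 0)),
        B'.subst (fun _ => A) ∈ F := by
      rintro B' (rfl | ⟨s, hs, rfl⟩)
      · exact hsubF hAsub
      · rw [subst_comp_const]; exact hsF (stilde_sepFam (hxv A hAsub).1 hs.1) hAsub
    obtain ⟨B', hB', hBG⟩ := hclose _ _ (fun _ => A) hrule h1 h2 h3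
    rcases hB' with rfl | ⟨s, hs, rfl⟩
    · exact hGΔ A hA hBG
    · rw [subst_comp_const] at hBG
      exact absurd hBG ((hxv A hAsub).2.2 s hs)

  -- build the countervaluation
  obtain ⟨w, hw, hXw⟩ := hP3
  have hE : ∀ x ∈ xv '' sub, ∃ A : Fm C ar ℕ, w A = x := fun x hx => hXw hx
  set t : Fm C ar ℕ → Fm C ar ℕ := fun B =>
    if h : ∃ A : Fm C ar ℕ, w A = xv B then h.choose else Fm.var 0 with ht
  have htv : ∀ B ∈ sub, w (t B) = xv B := by
    intro B hB
    have hex : ∃ A : Fm C ar ℕ, w A = xv B := hE _ (Set.mem_image_of_mem xv hB)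
    rw [ht]
    simp only [dif_pos hex]
    exact hex.choose_spec
  set u : Fm C ar ℕ → V := fun B => w (extFm sub t B) with hu
  have husub : ∀ B ∈ sub, u B = xv B := by
    intro B hB
    rw [hu]; simp only [extFm_of_mem hB]
    exact htv B hB
  have huval : M.IsVal u := by
    refine ⟨fun A => hw.1 _, ?_⟩
    intro c As
    by_cases hA : Fm.app c As ∈ sub
    · have h1 : u (Fm.app c As) = xv (Fm.app c As) := husub _ hA
      have h2 : (fun i => u (As i)) = fun i => xv (As i) :=
        funext (fun i => husub _ (hargsub hA i))
      rw [h1, h2]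
      exact hP2 c As hA
    · show w (extFm sub t (Fm.app c As)) ∈ _
      rw [extFm_app_of_not_mem hA]
      exact hw.2 c (fun i => extFm sub t (As i))
  intro hMC
  obtain ⟨A, hAΔ, hAdes⟩ := hMC u huval (fun A hA => by
    rw [husub A (hΓsub hA)]; exact hP4Γ A hA)
  rw [husub A (hΔsub hAΔ)] at hAdes
  exact hP4Δ A hAΔ hAdes

end Complete
/-- Theorem `analyticity`: for a finite monadic PNmatrix `M` with
discriminator determined by the family `Sf` of separators, the multiple-conclusion
calculus `R_M^{S̃} = R_∃ ∪ R_D ∪ R_Σ ∪ R_T` is a calculus for `▷_M` which is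
`𝒮`-analytic: whatever is derivable is derivable using only `𝒮`-subformulas of the
formulas involved. -/
theorem stmt15 {C : Type} {ar : C → ℕ} {V : Type}
    (M : Mat C ar V) (hWF : M.WF) (hfin : M.carrier.Finite)
    (Sf : V → V → Fm C ar ℕ)
    (hsep : ∀ x ∈ M.carrier, ∀ y ∈ M.carrier, x ≠ y → IsSeparator M (Sf x y) x y)
    (ι : V → ℕ) (hι : Function.Injective ι) :
    (∀ Γ Δ : Set (Fm C ar ℕ), MCD (calcR M Sf ι) Set.univ Δ Γ ↔ M.MConseq Γ Δ) ∧
    (∀ Γ Δ : Set (Fm C ar ℕ), M.MConseq Γ Δ →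
      MCD (calcR M Sf ι) (genSub (sepFam M Sf) (Γ ∪ Δ)) Δ Γ) := by
  have part2 : ∀ Γ Δ : Set (Fm C ar ℕ), M.MConseq Γ Δ →
      MCD (calcR M Sf ι) (genSub (sepFam M Sf) (Γ ∪ Δ)) Δ Γ := by
    intro Γ Δ h
    by_contra hnd
    exact completeness hWF hfin hsep hι Γ Δ hnd h
  refine ⟨fun Γ Δ => ⟨fun h => ?_, fun h => (part2 Γ Δ h).mono_F (Set.subset_univ _)⟩, part2⟩
  exact mcd_sound (fun r hr w hw hp => rules_sound hWF hsep hr hw hp) h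

end PNPaper
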